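/- Let H be a k-uniform hypergraph with n vertices and m edges with m < n. Then QE(H) − 2km(n−m)/n ≤ E(A_L) < QE(H), and the first inequality is an equality if and only if every pair of distinct edges of H is disjoint. -/

import Mathlib

open Matrix BigOperators Finset Polynomial

/-- Incidence matrix of a hypergraph on vertex set `Fin n` with edges `E : Fin m → Finset (Fin n)`. -/
noncomputable def inc {n m : ℕ} (E : Fin m → Finset (Fin n)) : Matrix (Fin n) (Fin m) ℝ :=
  fun v e => if v ∈ E e then 1 else 0

/-- Adjacency matrix of the line multigraph: `(e,f)`-entry is `|E e ∩ E f|` for `e ≠ f`, `0` on diagonal. -/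
noncomputable def lineAdj {n m : ℕ} (E : Fin m → Finset (Fin n)) : Matrix (Fin m) (Fin m) ℝ :=
  fun e f => if e = f then 0 else ((E e ∩ E f).card : ℝ)

/-- Adjacency matrix of the clique multigraph: `(u,v)`-entry is the number of edges containing both. -/
noncomputable def cliqueAdj {n m : ℕ} (E : Fin m → Finset (Fin n)) : Matrix (Fin n) (Fin n) ℝ :=
  fun u v => if u = v then 0 else ((univ.filter fun e => u ∈ E e ∧ v ∈ E e).card : ℝ)

/-- Degree of a vertex: number of edges containing it. -/
def deg {n m : ℕ} (E : Fin m → Finset (Fin n)) (v : Fin n) : ℕ :=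
  (univ.filter fun e => v ∈ E e).card

section Helpers

variable {N M : Type*} [Fintype N] [Fintype M] [DecidableEq N] [DecidableEq M]
variable {R : Type*} [CommRing R]

lemma scalar_eq_smul_one : Matrix.scalar N (X : R[X]) = (X : R[X]) • 1 := by
  ext i j
  by_cases h : i = j <;> simp [h, Matrix.scalar_apply, Matrix.diagonal, Matrix.one_apply]

lemma charpoly_conj_units (U A V : Matrix N N R) (hUV : U * V = 1) :
    (U * A * V).charpoly = A.charpoly := by
  have hmap : (U.map C) * (V.map C) = 1 := by
    rw [← Matrix.map_mul, hUV, Matrix.map_one _ (map_zero C) (map_one C)]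
  have hchar : charmatrix (U * A * V) = U.map C * charmatrix A * V.map C := by
    rw [charmatrix, charmatrix, scalar_eq_smul_one]
    rw [mul_sub, sub_mul]
    congr 1
    · rw [mul_smul_comm, smul_mul_assoc, mul_one, hmap]
    · simp [RingHom.mapMatrix_apply, ← Matrix.map_mul, Matrix.mul_assoc]
  rw [Matrix.charpoly, hchar, det_mul, det_mul, mul_right_comm, ← det_mul, hmap, det_one, one_mul]
  rfl

lemma charpoly_diagonal (v : N → R) :
    (Matrix.diagonal v).charpoly = ∏ i, (X - C (v i)) := by
  have : charmatrix (Matrix.diagonal v) = Matrix.diagonal (fun i => X - C (v i)) := by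
    ext i j
    by_cases h : i = j <;> simp [h, charmatrix_apply, Matrix.diagonal_apply]
  rw [Matrix.charpoly, this, det_diagonal]

lemma charpoly_mul_comm' (A : Matrix N M R) (B : Matrix M N R) :
    (A * B).charpoly * X ^ (Fintype.card M) = X ^ (Fintype.card N) * (B * A).charpoly := by
  set A' : Matrix N M R[X] := A.map C with hA'
  set B' : Matrix M N R[X] := B.map C with hB'
  have hAB : (A * B).map (C : R →+* R[X]) = A' * B' := Matrix.map_mul
  have hBA : (B * A).map (C : R →+* R[X]) = B' * A' := Matrix.map_mul
  have hM : fromBlocks ((X:R[X]) • 1 - A' * B') 0 B' 1 =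
      fromBlocks 1 (-A') 0 1 * fromBlocks ((X:R[X]) • 1) A' B' 1 := by
    rw [Matrix.fromBlocks_multiply]
    simp [sub_eq_add_neg]
  have hN : fromBlocks (1 : Matrix N N R[X]) A' 0 ((X:R[X]) • 1 - B' * A') =
      fromBlocks 1 0 (-B') 1 * fromBlocks 1 A' B' ((X:R[X]) • 1) := by
    rw [Matrix.fromBlocks_multiply]
    simp [sub_eq_add_neg, add_comm]
  have hcAB : charmatrix (A * B) = (X:R[X]) • 1 - A' * B' := by
    rw [charmatrix, scalar_eq_smul_one]; simp [RingHom.mapMatrix_apply, hAB]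
  have hcBA : charmatrix (B * A) = (X:R[X]) • 1 - B' * A' := by
    rw [charmatrix, scalar_eq_smul_one]; simp [RingHom.mapMatrix_apply, hBA]
  have hdM : ((X:R[X]) • 1 - A' * B').det = (fromBlocks ((X:R[X]) • 1) A' B' 1).det := by
    have := congrArg Matrix.det hM
    rwa [Matrix.det_fromBlocks_zero₁₂, Matrix.det_mul, Matrix.det_fromBlocks_zero₂₁,
      Matrix.det_one, Matrix.det_one, mul_one, one_mul, one_mul] at this
  have hdN : ((X:R[X]) • 1 - B' * A').det = (fromBlocks (1 : Matrix N N R[X]) A' B' ((X:R[X]) • 1)).det := by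
    have := congrArg Matrix.det hN
    rwa [Matrix.det_fromBlocks_zero₂₁, Matrix.det_mul, Matrix.det_fromBlocks_zero₁₂,
      Matrix.det_one, Matrix.det_one, mul_one, one_mul, one_mul] at this
  have hprod : fromBlocks ((X:R[X]) • 1) A' B' 1 * fromBlocks 1 0 0 ((X:R[X]) • 1) =
      fromBlocks ((X:R[X]) • (1 : Matrix N N R[X])) 0 0 1 * fromBlocks 1 A' B' ((X:R[X]) • 1) := by
    rw [Matrix.fromBlocks_multiply, Matrix.fromBlocks_multiply]
    congr 1 <;> simp [mul_smul_comm, smul_mul_assoc]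
  have hdet1 : (fromBlocks (1 : Matrix N N R[X]) 0 0 ((X:R[X]) • (1 : Matrix M M R[X]))).det
      = X ^ (Fintype.card M) := by
    simp [Matrix.det_fromBlocks_zero₁₂, Matrix.det_smul]
  have hdet2 : (fromBlocks ((X:R[X]) • (1 : Matrix N N R[X])) 0 0 (1 : Matrix M M R[X])).det
      = X ^ (Fintype.card N) := by
    simp [Matrix.det_fromBlocks_zero₁₂, Matrix.det_smul]
  have := congrArg Matrix.det hprod
  rw [Matrix.det_mul, Matrix.det_mul, hdet1, hdet2] at this
  rw [Matrix.charpoly, Matrix.charpoly, hcAB, hcBA, hdM, hdN]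
  exact this

lemma smul_one_add_charpoly {A : Matrix N N ℝ} (hA : A.IsHermitian) (r : ℝ) :
    ((r : ℝ) • (1 : Matrix N N ℝ) + A).charpoly = ∏ i, (X - C (r + hA.eigenvalues i)) := by
  set U : Matrix N N ℝ := (hA.eigenvectorUnitary : Matrix N N ℝ) with hUdef
  have hU : U * star U = 1 := Matrix.mem_unitaryGroup_iff.mp (hA.eigenvectorUnitary).2
  have key : (r : ℝ) • (1 : Matrix N N ℝ) + A
      = U * Matrix.diagonal (fun i => r + hA.eigenvalues i) * star U := by
    conv_lhs => rw [hA.spectral_theorem]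
    have h1 : Matrix.diagonal (fun i => r + hA.eigenvalues i)
        = (r : ℝ) • (1 : Matrix N N ℝ) + Matrix.diagonal hA.eigenvalues := by
      rw [smul_one_eq_diagonal, Matrix.diagonal_add]
    rw [h1, Matrix.mul_add, Matrix.add_mul, mul_smul_comm, smul_mul_assoc,
      mul_one, hU, RCLike.ofReal_real_eq_id]
    simp
    rfl
  rw [key, charpoly_conj_units _ _ _ hU, _root_.charpoly_diagonal]

lemma charpoly_isHermitian {A : Matrix N N ℝ} (hA : A.IsHermitian) :
    A.charpoly = ∏ i, (X - C (hA.eigenvalues i)) := by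
  have := smul_one_add_charpoly hA 0
  simpa using this

lemma trace_eq_sum_eig {A : Matrix N N ℝ} (hA : A.IsHermitian) :
    A.trace = ∑ i, hA.eigenvalues i := by
  set U : Matrix N N ℝ := (hA.eigenvectorUnitary : Matrix N N ℝ) with hUdef
  have hU : star U * U = 1 := Matrix.mem_unitaryGroup_iff'.mp (hA.eigenvectorUnitary).2
  conv_lhs => rw [hA.spectral_theorem]
  rw [Unitary.conjStarAlgAut_apply, ← hUdef]
  rw [Matrix.trace_mul_cycle, hU, one_mul, Matrix.trace_diagonal]
  simp [RCLike.ofReal_real_eq_id]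

lemma eq_zero_of_eigenvalues_zero {A : Matrix N N ℝ} (hA : A.IsHermitian)
    (h : ∀ i, hA.eigenvalues i = 0) : A = 0 := by
  have := hA.spectral_theorem
  have hd : Matrix.diagonal (RCLike.ofReal ∘ hA.eigenvalues) = (0 : Matrix N N ℝ) := by
    rw [RCLike.ofReal_real_eq_id]
    ext i j
    by_cases hij : i = j <;> simp [hij, Matrix.diagonal_apply, h]
  rw [hd] at this
  simpa using this

lemma sum_g_eq {n m : ℕ} (μ : Fin n → ℝ) (ν : Fin m → ℝ)
    (h : (∏ i, (X - C (μ i))) * X ^ m = X ^ n * ∏ j, (X - C (ν j))) (g : ℝ → ℝ) :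
    (∑ i, g (μ i)) + m * g 0 = n * g 0 + ∑ j, g (ν j) := by
  have hprodμ : (∏ i, (X - C (μ i))) = ((Finset.univ.val.map μ).map fun a => X - C a).prod := by
    rw [Multiset.map_map]; rfl
  have hprodν : (∏ j, (X - C (ν j))) = ((Finset.univ.val.map ν).map fun a => X - C a).prod := by
    rw [Multiset.map_map]; rfl
  have hμ0 : (∏ i, (X - C (μ i))) ≠ 0 :=
    (monic_prod_of_monic _ _ fun i _ => monic_X_sub_C (μ i)).ne_zero
  have hν0 : (∏ j, (X - C (ν j))) ≠ 0 :=
    (monic_prod_of_monic _ _ fun j _ => monic_X_sub_C (ν j)).ne_zero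
  have hX0 : (X : ℝ[X]) ≠ 0 := X_ne_zero
  have hroots := congrArg Polynomial.roots h
  rw [Polynomial.roots_mul (mul_ne_zero hμ0 (pow_ne_zero _ hX0)),
      Polynomial.roots_mul (mul_ne_zero (pow_ne_zero _ hX0) hν0),
      Polynomial.roots_pow, Polynomial.roots_pow, Polynomial.roots_X,
      Multiset.nsmul_singleton, Multiset.nsmul_singleton,
      hprodμ, hprodν, Polynomial.roots_multiset_prod_X_sub_C,
      Polynomial.roots_multiset_prod_X_sub_C] at hroots
  have hsum := congrArg (fun s : Multiset ℝ => (s.map g).sum) hroots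
  simp only [Multiset.map_add, Multiset.sum_add, Multiset.map_replicate,
    Multiset.sum_replicate, Multiset.map_map, nsmul_eq_mul] at hsum
  convert hsum using 2 <;> simp [Finset.sum]

lemma btb_eq {n m k : ℕ} (E : Fin m → Finset (Fin n)) (hk : ∀ e, (E e).card = k) :
    (inc E)ᵀ * inc E = (k : ℝ) • (1 : Matrix (Fin m) (Fin m) ℝ) + lineAdj E := by
  ext e f
  have hsum : ((inc E)ᵀ * inc E) e f = ((E e ∩ E f).card : ℝ) := by
    rw [Matrix.mul_apply]
    have : ∀ v, (inc E)ᵀ e v * inc E v f = if v ∈ E e ∩ E f then (1:ℝ) else 0 := by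
      intro v
      simp [inc, Matrix.transpose_apply, Finset.mem_inter, ite_and]
      split <;> simp
    rw [Finset.sum_congr rfl fun v _ => this v, Finset.sum_ite_mem, Finset.univ_inter,
      Finset.sum_const, nsmul_eq_mul, mul_one]
  by_cases hef : e = f
  · subst hef
    simp [hsum, lineAdj, Matrix.one_apply, Finset.inter_self, hk e]
  · simp [hsum, lineAdj, hef, Matrix.one_apply]

lemma trace_lineAdj {n m : ℕ} (E : Fin m → Finset (Fin n)) : (lineAdj E).trace = 0 := by
  simp [Matrix.trace, Matrix.diag, lineAdj]

lemma eig_zero_of_eq_zero {A : Matrix N N ℝ} (hA : A.IsHermitian) (h : A = 0) (i : N) :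
    hA.eigenvalues i = 0 := by
  subst h
  have hev := hA.mulVec_eigenvectorBasis i
  rw [Matrix.zero_mulVec] at hev
  have hv : ⇑(hA.eigenvectorBasis i) ≠ 0 := by
    intro hc
    exact hA.eigenvectorBasis.orthonormal.ne_zero i (by ext j; exact congrFun hc j)
  rcases smul_eq_zero.mp hev.symm with h1 | h2
  · exact h1
  · exact absurd h2 hv

end Helpers
theorem stmt15 {n m k : ℕ} (E : Fin m → Finset (Fin n))
    (hk2 : 2 ≤ k) (hk : ∀ e, (E e).card = k) (hm : 1 ≤ m) (hmn : m < n)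
    (hQ : (inc E * (inc E)ᵀ).IsHermitian)
    (hL : (lineAdj E).IsHermitian) :
    ((∑ i, |hQ.eigenvalues i - (k * m : ℝ) / n|) - 2 * k * m * ((n : ℝ) - m) / n ≤
        ∑ j, |hL.eigenvalues j|) ∧
    (∑ j, |hL.eigenvalues j|) < (∑ i, |hQ.eigenvalues i - (k * m : ℝ) / n|) ∧
    ((∑ i, |hQ.eigenvalues i - (k * m : ℝ) / n|) - 2 * k * m * ((n : ℝ) - m) / n =
        (∑ j, |hL.eigenvalues j|) ↔
      ∀ e f : Fin m, e ≠ f → Disjoint (E e) (E f)) := by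
  have hn0 : (0:ℝ) < n := by
    have : 0 < n := lt_of_le_of_lt (Nat.zero_le m) hmn
    exact_mod_cast this
  have hk0 : (0:ℝ) < k := by
    have : 0 < k := lt_of_lt_of_le (by norm_num) hk2
    exact_mod_cast this
  have hmn' : (m:ℝ) < n := by exact_mod_cast hmn
  have hm0 : (0:ℝ) < m := by exact_mod_cast hm
  set c : ℝ := (k * m : ℝ) / n with hc
  set d : ℝ := k - c with hd
  set t : Fin m → ℝ := hL.eigenvalues with htdef
  have hc0 : (0:ℝ) ≤ c := by positivity
  have hd0 : 0 < d := by
    rw [hd, hc, sub_pos, div_lt_iff₀ hn0]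
    nlinarith
  -- polynomial identity
  have hpoly : (∏ i, (X - C (hQ.eigenvalues i))) * X ^ m
      = X ^ n * ∏ j, (X - C ((k:ℝ) + t j)) := by
    have h1 := charpoly_isHermitian hQ
    have h2 : ((inc E)ᵀ * inc E).charpoly = ∏ j, (X - C ((k:ℝ) + t j)) := by
      rw [btb_eq E hk, smul_one_add_charpoly hL]
    have h3 := _root_.charpoly_mul_comm' (inc E) (inc E)ᵀ
    rw [h1, h2, Fintype.card_fin, Fintype.card_fin] at h3
    exact h3
  have hsum := sum_g_eq _ _ hpoly (fun x => |x - c|)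
  simp only [zero_sub, abs_neg, abs_of_nonneg hc0] at hsum
  have habs : ∑ j, |(k:ℝ) + t j - c| = ∑ j, |t j + d| :=
    Finset.sum_congr rfl fun j _ => by rw [hd]; ring_nf
  rw [habs] at hsum
  have hQE : (∑ i, |hQ.eigenvalues i - c|) = ((n:ℝ) - m) * c + ∑ j, |t j + d| := by
    linarith
  have ht0 : ∑ j, t j = 0 := by
    have h := trace_eq_sum_eig hL
    rw [trace_lineAdj] at h
    exact h.symm
  have heq_md : ((n:ℝ) - m) * c = (m:ℝ) * d := by
    rw [hd, hc]; field_simp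
  have harith : 2 * (k:ℝ) * m * ((n:ℝ) - m) / n = (m:ℝ) * d + ((n:ℝ) - m) * c := by
    rw [hd, hc]; field_simp; ring
  have hterm_ub : ∀ j, |t j + d| ≤ |t j| + d := fun j => by
    calc |t j + d| ≤ |t j| + |d| := abs_add_le _ _
    _ = |t j| + d := by rw [abs_of_pos hd0]
  have hsum_const : ∑ _j : Fin m, d = (m:ℝ) * d := by
    rw [Finset.sum_const, Finset.card_univ, Fintype.card_fin, nsmul_eq_mul]
  -- claim 1
  have claim1 : (∑ i, |hQ.eigenvalues i - c|) - 2*(k:ℝ)*m*((n:ℝ)-m)/n ≤ ∑ j, |t j| := by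
    rw [hQE, harith]
    have h := Finset.sum_le_sum (fun j (_ : j ∈ Finset.univ) => hterm_ub j)
    rw [Finset.sum_add_distrib, hsum_const] at h
    linarith
  -- claim 2
  obtain ⟨j0, hj0⟩ : ∃ j, 0 ≤ t j := by
    by_contra hcon
    push_neg at hcon
    have hne : (Finset.univ : Finset (Fin m)).Nonempty := ⟨⟨0, hm⟩, Finset.mem_univ _⟩
    have := Finset.sum_neg (fun j _ => hcon j) hne
    linarith
  have claim2 : (∑ j, |t j|) < ∑ i, |hQ.eigenvalues i - c| := by
    rw [hQE, heq_md]
    have hlt : ∑ j, |t j| < ∑ j, (|t j + d| + d) := by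
      apply Finset.sum_lt_sum
      · intro j _
        have := abs_sub_abs_le_abs_sub (t j) (t j + d)
        have h2 : |t j - (t j + d)| = d := by
          rw [show t j - (t j + d) = -d by ring, abs_neg, abs_of_pos hd0]
        linarith
      · refine ⟨j0, Finset.mem_univ _, ?_⟩
        rw [abs_of_nonneg hj0, abs_of_nonneg (by linarith : 0 ≤ t j0 + d)]
        linarith
    rw [Finset.sum_add_distrib, hsum_const] at hlt
    linarith
  refine ⟨claim1, claim2, ?_⟩
  constructor
  · intro heq
    -- all terms extremal
    have hsums : ∑ j, |t j + d| = ∑ j, (|t j| + d) := by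
      rw [Finset.sum_add_distrib, hsum_const]
      rw [hQE, harith] at heq
      linarith
    have heach : ∀ j ∈ Finset.univ, |t j + d| = |t j| + d :=
      (Finset.sum_eq_sum_iff_of_le (fun j _ => hterm_ub j)).mp hsums
    have htpos : ∀ j, 0 ≤ t j := by
      intro j
      have h1 := heach j (Finset.mem_univ j)
      rcases abs_cases (t j + d) with ⟨e1, _⟩ | ⟨e1, _⟩ <;>
        rcases abs_cases (t j) with ⟨e2, _⟩ | ⟨e2, _⟩ <;> linarith
    have htzero : ∀ j, t j = 0 := by
      have := (Finset.sum_eq_zero_iff_of_nonneg (fun j _ => htpos j)).mp ht0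
      exact fun j => this j (Finset.mem_univ j)
    have hA0 : lineAdj E = 0 := eq_zero_of_eigenvalues_zero hL htzero
    intro e f hef
    have h0 : lineAdj E e f = 0 := by rw [hA0]; rfl
    rw [lineAdj, if_neg hef] at h0
    have : (E e ∩ E f).card = 0 := by exact_mod_cast h0
    rw [Finset.card_eq_zero] at this
    exact Finset.disjoint_iff_inter_eq_empty.mpr this
  · intro hdis
    have hA0 : lineAdj E = 0 := by
      ext e f
      by_cases hef : e = f
      · simp [lineAdj, hef]
      · simp [lineAdj, hef, Finset.card_eq_zero.mpr
          (Finset.disjoint_iff_inter_eq_empty.mp (hdis e f hef))]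
    have htzero : ∀ j, t j = 0 := fun j => eig_zero_of_eq_zero hL hA0 j
    rw [hQE, harith]
    have h1 : ∑ j, |t j + d| = (m:ℝ) * d := by
      rw [← hsum_const]
      exact Finset.sum_congr rfl fun j _ => by rw [htzero j, zero_add, abs_of_pos hd0]
    have h2 : ∑ j, |t j| = 0 :=
      Finset.sum_eq_zero fun j _ => by rw [htzero j, abs_zero]
    rw [h1, h2]
    ring
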